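/- Soft-thresholding optimality: for a matrix G ∈ ℂ^{m×n} with SVD G = U diag(σ) V* and τ > 0, the matrix S_τ(G) = U diag((σ−τ)⁺) V* is the unique minimizer of X ↦ τ‖X‖_* + ½‖X − G‖_F², where ‖·‖_* is the nuclear norm and ‖·‖_F the Frobenius norm. -/

import Mathlib

open Matrix ComplexOrder

/-- Nuclear norm: the sum of the singular values of `X`, i.e. the square roots of the
eigenvalues of `Xᴴ * X`. -/
noncomputable def nuclearNorm {m n : ℕ} (X : Matrix (Fin m) (Fin n) ℂ) : ℝ :=
  ∑ i, Real.sqrt ((Matrix.posSemidef_conjTranspose_mul_self X).1.eigenvalues i)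

/-- Squared Frobenius norm. -/
noncomputable def frobSq {m n : ℕ} (X : Matrix (Fin m) (Fin n) ℂ) : ℝ :=
  ∑ i, ∑ j, ‖X i j‖ ^ 2

namespace ST

open Polynomial Finset

variable {m n : ℕ}

/-- real Frobenius inner product -/
noncomputable def rip (A B : Matrix (Fin m) (Fin n) ℂ) : ℝ :=
  ∑ i, ∑ j, ((starRingEnd ℂ) (A i j) * B i j).re

lemma conj_mul_self_re (z : ℂ) : ((starRingEnd ℂ) z * z).re = ‖z‖ ^ 2 := by
  simp [Complex.mul_re, Complex.conj_re, Complex.conj_im, Complex.sq_norm, Complex.normSq_apply]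

lemma abs_sq_add (a b : ℂ) :
    ‖a + b‖ ^ 2
      = ‖a‖ ^ 2 + 2 * ((starRingEnd ℂ) a * b).re + ‖b‖ ^ 2 := by
  simp [Complex.sq_norm, Complex.normSq_apply, Complex.mul_re, Complex.add_re, Complex.add_im,
    Complex.conj_re, Complex.conj_im]
  ring

lemma frobSq_add (A B : Matrix (Fin m) (Fin n) ℂ) :
    frobSq (A + B) = frobSq A + 2 * rip A B + frobSq B := by
  unfold frobSq rip
  simp only [Matrix.add_apply, abs_sq_add, Finset.sum_add_distrib, Finset.mul_sum]

lemma frobSq_nonneg (A : Matrix (Fin m) (Fin n) ℂ) : 0 ≤ frobSq A := by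
  unfold frobSq
  positivity

lemma frobSq_pos {A : Matrix (Fin m) (Fin n) ℂ} (h : A ≠ 0) : 0 < frobSq A := by
  rcases lt_or_eq_of_le (frobSq_nonneg A) with h' | h'
  · exact h'
  exfalso; apply h
  ext i j
  have h0 : ∀ i ∈ Finset.univ, (0:ℝ) ≤ ∑ j, ‖A i j‖ ^ 2 := by
    intro i _; positivity
  have h1 := (Finset.sum_eq_zero_iff_of_nonneg h0).mp h'.symm i (Finset.mem_univ i)
  have h2 : ∀ j ∈ Finset.univ, (0:ℝ) ≤ ‖A i j‖ ^ 2 := by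
    intro j _; positivity
  have h3 := (Finset.sum_eq_zero_iff_of_nonneg h2).mp h1 j (Finset.mem_univ j)
  simpa using pow_eq_zero_iff (n := 2) (by norm_num) |>.mp h3

lemma rip_comm (A B : Matrix (Fin m) (Fin n) ℂ) : rip A B = rip B A := by
  unfold rip
  refine Finset.sum_congr rfl fun i _ => Finset.sum_congr rfl fun j _ => ?_
  simp [Complex.mul_re, Complex.conj_re, Complex.conj_im]
  ring

lemma rip_trace (A B : Matrix (Fin m) (Fin n) ℂ) :
    rip A B = (Matrix.trace (Aᴴ * B)).re := by
  unfold rip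
  rw [Matrix.trace, Complex.re_sum, Finset.sum_comm]
  refine Finset.sum_congr rfl fun j _ => ?_
  rw [Matrix.diag_apply, Matrix.mul_apply, Complex.re_sum]
  refine Finset.sum_congr rfl fun i _ => ?_
  rw [Matrix.conjTranspose_apply]
  rfl

lemma rip_sub_left (A B C : Matrix (Fin m) (Fin n) ℂ) :
    rip (A - B) C = rip A C - rip B C := by
  simp [rip_trace, Matrix.conjTranspose_sub, Matrix.sub_mul, Complex.sub_re]

lemma rip_neg_right (A B : Matrix (Fin m) (Fin n) ℂ) :
    rip A (-B) = - rip A B := by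
  simp [rip_trace, Matrix.mul_neg, Complex.neg_re]


/-- rectangular diagonal matrix -/
def rd (m n : ℕ) (d : ℕ → ℝ) : Matrix (Fin m) (Fin n) ℂ :=
  Matrix.of fun (i : Fin m) (j : Fin n) => if (i : ℕ) = (j : ℕ) then ((d (i : ℕ) : ℝ) : ℂ) else 0

lemma rd_conj_mul (d e : ℕ → ℝ) :
    (rd m n d)ᴴ * (rd m n e)
      = Matrix.diagonal (fun j : Fin n =>
          if (j : ℕ) < m then ((d (j : ℕ) * e (j : ℕ) : ℝ) : ℂ) else 0) := by
  ext j j'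
  rw [Matrix.mul_apply]
  by_cases hjj' : j = j'
  · subst hjj'
    rw [Matrix.diagonal_apply_eq]
    by_cases h : (j : ℕ) < m
    · rw [Finset.sum_eq_single (⟨(j : ℕ), h⟩ : Fin m)]
      · simp [rd, Matrix.conjTranspose_apply, h]
      · intro i _ hi
        have hij : (i : ℕ) ≠ (j : ℕ) := by
          intro hc; exact hi (Fin.ext hc)
        simp [rd, Matrix.conjTranspose_apply, hij]
      · simp
    · rw [if_neg h]
      apply Finset.sum_eq_zero
      intro i _
      have hij : (i : ℕ) ≠ (j : ℕ) := by
        intro hc; exact h (hc ▸ i.isLt)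
      simp [rd, Matrix.conjTranspose_apply, hij]
  · rw [Matrix.diagonal_apply_ne _ hjj']
    apply Finset.sum_eq_zero
    intro i _
    by_cases h1 : (i : ℕ) = (j : ℕ)
    · have h2 : (i : ℕ) ≠ (j' : ℕ) := by
        intro hc; exact hjj' (Fin.ext (h1 ▸ hc).symm ▸ rfl)
      simp [rd, Matrix.conjTranspose_apply, h2]
    · simp [rd, Matrix.conjTranspose_apply, h1]

lemma sandwich {U : Matrix (Fin m) (Fin m) ℂ} (hU : Uᴴ * U = 1)
    (V : Matrix (Fin n) (Fin n) ℂ) (d e : ℕ → ℝ) :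
    (U * rd m n d * Vᴴ)ᴴ * (U * rd m n e * Vᴴ)
      = V * ((rd m n d)ᴴ * rd m n e) * Vᴴ := by
  simp only [Matrix.conjTranspose_mul, Matrix.conjTranspose_conjTranspose]
  calc V * ((rd m n d)ᴴ * Uᴴ) * (U * rd m n e * Vᴴ)
      = V * ((rd m n d)ᴴ * ((Uᴴ * U) * (rd m n e))) * Vᴴ := by
        simp only [Matrix.mul_assoc]
    _ = V * ((rd m n d)ᴴ * rd m n e) * Vᴴ := by rw [hU, Matrix.one_mul]


lemma scalar_comm {k : ℕ} (r : ℂ[X]) (M : Matrix (Fin k) (Fin k) ℂ[X]) :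
    M * Matrix.scalar (Fin k) r = Matrix.scalar (Fin k) r * M := by
  ext i j
  simp [Matrix.scalar, Matrix.mul_apply, Matrix.diagonal_apply, mul_comm]

lemma charpoly_unitary_conj {k : ℕ} (Q A : Matrix (Fin k) (Fin k) ℂ)
    (h1 : Q * Qᴴ = 1) (h2 : Qᴴ * Q = 1) :
    (Q * A * Qᴴ).charpoly = A.charpoly := by
  classical
  set f : ℂ →+* ℂ[X] := Polynomial.C
  have hmap1 : Q.map f * Qᴴ.map f = 1 := by
    rw [← Matrix.map_mul, h1]
    simp [Matrix.map_one]
  have hcm : Matrix.charmatrix (Q * A * Qᴴ) = Q.map f * Matrix.charmatrix A * Qᴴ.map f := by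
    unfold Matrix.charmatrix
    rw [Matrix.mul_sub, Matrix.sub_mul]
    congr 1
    · rw [scalar_comm, Matrix.mul_assoc, hmap1, Matrix.mul_one]
    · simp only [RingHom.mapMatrix_apply]
      rw [Matrix.map_mul, Matrix.map_mul]
  rw [Matrix.charpoly, Matrix.charpoly, hcm, Matrix.det_mul, Matrix.det_mul]
  have : (Q.map f).det * (Qᴴ.map f).det = 1 := by
    rw [← Matrix.det_mul, hmap1, Matrix.det_one]
  calc (Q.map f).det * (Matrix.charmatrix A).det * (Qᴴ.map f).det
      = (Matrix.charmatrix A).det * ((Q.map f).det * (Qᴴ.map f).det) := by ring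
    _ = (Matrix.charmatrix A).det := by rw [this, mul_one]

lemma eig_multiset {k : ℕ} {A : Matrix (Fin k) (Fin k) ℂ} (hA : A.IsHermitian)
    (P : Matrix (Fin k) (Fin k) ℂ) (hP1 : P * Pᴴ = 1) (hP2 : Pᴴ * P = 1)
    (d : Fin k → ℝ)
    (h : A = P * Matrix.diagonal (fun j => ((d j : ℝ) : ℂ)) * Pᴴ) :
    Multiset.map d Finset.univ.val = Multiset.map hA.eigenvalues Finset.univ.val := by
  classical
  set W : Matrix (Fin k) (Fin k) ℂ := (hA.eigenvectorUnitary : Matrix (Fin k) (Fin k) ℂ) with hWdef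
  have hW1 : W * Wᴴ = 1 := by
    have := (Matrix.mem_unitaryGroup_iff).mp hA.eigenvectorUnitary.2
    simpa [Matrix.star_eq_conjTranspose] using this
  have hW2 : Wᴴ * W = 1 := by
    have := (Matrix.mem_unitaryGroup_iff').mp hA.eigenvectorUnitary.2
    simpa [Matrix.star_eq_conjTranspose] using this
  set μ : Fin k → ℝ := hA.eigenvalues
  have hspec : A = W * Matrix.diagonal (fun j => ((μ j : ℝ) : ℂ)) * Wᴴ := by
    have := hA.spectral_theorem
    simpa [Matrix.star_eq_conjTranspose, Function.comp_def] using this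
  set Q : Matrix (Fin k) (Fin k) ℂ := Pᴴ * W with hQdef
  have hQ1 : Q * Qᴴ = 1 := by
    rw [hQdef, Matrix.conjTranspose_mul, Matrix.conjTranspose_conjTranspose]
    calc Pᴴ * W * (Wᴴ * P) = Pᴴ * (W * Wᴴ) * P := by simp only [Matrix.mul_assoc]
      _ = 1 := by rw [hW1, Matrix.mul_one, hP2]
  have hQ2 : Qᴴ * Q = 1 := by
    rw [hQdef, Matrix.conjTranspose_mul, Matrix.conjTranspose_conjTranspose]
    calc Wᴴ * P * (Pᴴ * W) = Wᴴ * (P * Pᴴ) * W := by simp only [Matrix.mul_assoc]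
      _ = 1 := by rw [hP1, Matrix.mul_one, hW2]
  have key : Matrix.diagonal (fun j => ((d j : ℝ) : ℂ))
      = Q * Matrix.diagonal (fun j => ((μ j : ℝ) : ℂ)) * Qᴴ := by
    have h' : P * Matrix.diagonal (fun j => ((d j : ℝ) : ℂ)) * Pᴴ
        = W * Matrix.diagonal (fun j => ((μ j : ℝ) : ℂ)) * Wᴴ := by rw [← h, ← hspec]
    calc Matrix.diagonal (fun j => ((d j : ℝ) : ℂ))
        = Pᴴ * (P * Matrix.diagonal (fun j => ((d j : ℝ) : ℂ)) * Pᴴ) * P := by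
          have : Pᴴ * (P * Matrix.diagonal (fun j => ((d j : ℝ) : ℂ)) * Pᴴ) * P
              = (Pᴴ * P) * Matrix.diagonal (fun j => ((d j : ℝ) : ℂ)) * (Pᴴ * P) := by
            simp only [Matrix.mul_assoc]
          rw [this, hP2, Matrix.one_mul, Matrix.mul_one]
      _ = Pᴴ * (W * Matrix.diagonal (fun j => ((μ j : ℝ) : ℂ)) * Wᴴ) * P := by rw [h']
      _ = Q * Matrix.diagonal (fun j => ((μ j : ℝ) : ℂ)) * Qᴴ := by
          rw [hQdef, Matrix.conjTranspose_mul, Matrix.conjTranspose_conjTranspose]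
          simp only [Matrix.mul_assoc]
  have hcp : (Matrix.diagonal (fun j => ((d j : ℝ) : ℂ))).charpoly
      = (Matrix.diagonal (fun j => ((μ j : ℝ) : ℂ))).charpoly := by
    rw [key]
    exact charpoly_unitary_conj _ _ hQ1 hQ2
  have hdiag : ∀ (e : Fin k → ℝ), (Matrix.diagonal (fun j => ((e j : ℝ) : ℂ))).charpoly
      = ((Multiset.map (fun j : Fin k => ((e j : ℝ) : ℂ)) Finset.univ.val).map
          (fun a => Polynomial.X - Polynomial.C a)).prod := by
    intro e
    rw [Matrix.charpoly_of_upperTriangular _ (Matrix.blockTriangular_diagonal _)]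
    rw [Finset.prod_eq_multiset_prod, Multiset.map_map]
    simp [Function.comp]
  have hroots : Multiset.map (fun j : Fin k => ((d j : ℝ) : ℂ)) Finset.univ.val
      = Multiset.map (fun j : Fin k => ((μ j : ℝ) : ℂ)) Finset.univ.val := by
    have h1 := Polynomial.roots_multiset_prod_X_sub_C
      (Multiset.map (fun j : Fin k => ((d j : ℝ) : ℂ)) Finset.univ.val)
    have h2 := Polynomial.roots_multiset_prod_X_sub_C
      (Multiset.map (fun j : Fin k => ((μ j : ℝ) : ℂ)) Finset.univ.val)
    rw [← h1, ← h2, ← hdiag, ← hdiag, hcp]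
  have : Multiset.map (fun x : ℝ => (x : ℂ)) (Multiset.map d Finset.univ.val)
      = Multiset.map (fun x : ℝ => (x : ℂ)) (Multiset.map μ Finset.univ.val) := by
    rw [Multiset.map_map, Multiset.map_map]
    exact hroots
  exact Multiset.map_injective Complex.ofReal_injective this


lemma sum_f_eq_of_multiset {k : ℕ} {d e : Fin k → ℝ}
    (h : Multiset.map d Finset.univ.val = Multiset.map e Finset.univ.val) (f : ℝ → ℝ) :
    ∑ j, f (d j) = ∑ j, f (e j) := by
  rw [Finset.sum_eq_multiset_sum, Finset.sum_eq_multiset_sum]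
  have h1 : Multiset.map (fun j => f (d j)) Finset.univ.val
      = Multiset.map f (Multiset.map d Finset.univ.val) := by rw [Multiset.map_map]; rfl
  have h2 : Multiset.map (fun j => f (e j)) Finset.univ.val
      = Multiset.map f (Multiset.map e Finset.univ.val) := by rw [Multiset.map_map]; rfl
  rw [h1, h2, h]

lemma nuclearNorm_UDV {U : Matrix (Fin m) (Fin m) ℂ} {V : Matrix (Fin n) (Fin n) ℂ}
    (hU : Uᴴ * U = 1) (hV1 : V * Vᴴ = 1) (hV2 : Vᴴ * V = 1)
    (d : ℕ → ℝ) (hd : ∀ k, 0 ≤ d k) :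
    nuclearNorm (U * rd m n d * Vᴴ) = ∑ j : Fin n, (if (j : ℕ) < m then d (j : ℕ) else 0) := by
  classical
  set S := U * rd m n d * Vᴴ with hS
  set hA : (Sᴴ * S).IsHermitian := (Matrix.posSemidef_conjTranspose_mul_self S).1 with hAdef
  set e : Fin n → ℝ := fun j => if (j : ℕ) < m then d (j : ℕ) * d (j : ℕ) else 0 with he
  have hSS : Sᴴ * S = V * Matrix.diagonal (fun j => ((e j : ℝ) : ℂ)) * Vᴴ := by
    have hfun : (fun j : Fin n => if (j : ℕ) < m then ((d (j : ℕ) * d (j : ℕ) : ℝ) : ℂ) else 0)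
        = fun j => ((e j : ℝ) : ℂ) := by
      funext j; by_cases h : (j : ℕ) < m <;> simp [he, h]
    rw [hS, sandwich hU, rd_conj_mul, hfun]
  have hmult := eig_multiset hA V hV1 hV2 e hSS
  have hsum := sum_f_eq_of_multiset hmult Real.sqrt
  have : nuclearNorm S = ∑ j, Real.sqrt (hA.eigenvalues j) := rfl
  rw [this, ← hsum]
  refine Finset.sum_congr rfl fun j _ => ?_
  by_cases h : (j : ℕ) < m
  · simp only [he, if_pos h]
    exact Real.sqrt_mul_self (hd _)
  · simp [he, h]

lemma rip_UDV {U : Matrix (Fin m) (Fin m) ℂ} {V : Matrix (Fin n) (Fin n) ℂ}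
    (hU : Uᴴ * U = 1) (hV2 : Vᴴ * V = 1) (d e : ℕ → ℝ) :
    rip (U * rd m n d * Vᴴ) (U * rd m n e * Vᴴ)
      = ∑ j : Fin n, (if (j : ℕ) < m then d (j : ℕ) * e (j : ℕ) else 0) := by
  rw [rip_trace, sandwich hU, Matrix.trace_mul_cycle, ← Matrix.mul_assoc, hV2, Matrix.one_mul,
    rd_conj_mul, Matrix.trace_diagonal, Complex.re_sum]
  refine Finset.sum_congr rfl fun j _ => ?_
  by_cases h : (j : ℕ) < m <;> simp [h]

lemma col_sq (M : Matrix (Fin m) (Fin n) ℂ) (j : Fin n) :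
    ∑ i, ‖M i j‖ ^ 2 = ((Mᴴ * M) j j).re := by
  rw [Matrix.mul_apply, Complex.re_sum]
  exact Finset.sum_congr rfl fun i _ => by
    rw [Matrix.conjTranspose_apply]; exact (conj_mul_self_re _).symm

lemma diag_quad {k : ℕ} (Q : Matrix (Fin k) (Fin k) ℂ) (f : Fin k → ℝ) (j : Fin k) :
    ((Qᴴ * Matrix.diagonal (fun i => ((f i : ℝ) : ℂ)) * Q) j j).re
      = ∑ i, f i * ‖Q i j‖ ^ 2 := by
  rw [Matrix.mul_assoc, Matrix.mul_apply, Complex.re_sum]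
  refine Finset.sum_congr rfl fun i _ => ?_
  rw [Matrix.conjTranspose_apply, Matrix.diagonal_mul]
  have h1 : star (Q i j) * (((f i : ℝ) : ℂ) * Q i j)
      = ((f i : ℝ) : ℂ) * (star (Q i j) * Q i j) := by ring
  rw [h1, Complex.re_ofReal_mul]
  congr 1
  exact conj_mul_self_re _


lemma dual_bound {U : Matrix (Fin m) (Fin m) ℂ} {V : Matrix (Fin n) (Fin n) ℂ}
    (hU2 : Uᴴ * U = 1) (hV1 : V * Vᴴ = 1) (hV2 : Vᴴ * V = 1)
    {τ : ℝ} (hτ : 0 ≤ τ) (q : ℕ → ℝ) (hq0 : ∀ k, 0 ≤ q k) (hq1 : ∀ k, q k ≤ τ)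
    (X : Matrix (Fin m) (Fin n) ℂ) :
    rip (U * rd m n q * Vᴴ) X ≤ τ * nuclearNorm X := by
  classical
  set D := U * rd m n q * Vᴴ with hD
  set hA : (Xᴴ * X).IsHermitian := (Matrix.posSemidef_conjTranspose_mul_self X).1 with hAdef
  set W : Matrix (Fin n) (Fin n) ℂ := (hA.eigenvectorUnitary : Matrix (Fin n) (Fin n) ℂ)
    with hWdef
  have hW1 : W * Wᴴ = 1 := by
    simpa [Matrix.star_eq_conjTranspose] using
      (Matrix.mem_unitaryGroup_iff).mp hA.eigenvectorUnitary.2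
  have hW2 : Wᴴ * W = 1 := by
    simpa [Matrix.star_eq_conjTranspose] using
      (Matrix.mem_unitaryGroup_iff').mp hA.eigenvectorUnitary.2
  set μ : Fin n → ℝ := hA.eigenvalues with hμ
  have hμ0 : ∀ j, 0 ≤ μ j :=
    fun j => (Matrix.posSemidef_conjTranspose_mul_self X).eigenvalues_nonneg j
  have hspec : Xᴴ * X = W * Matrix.diagonal (fun j => ((μ j : ℝ) : ℂ)) * Wᴴ := by
    simpa [Matrix.star_eq_conjTranspose, Function.comp_def] using hA.spectral_theorem
  have hXW : (X * W)ᴴ * (X * W) = Matrix.diagonal (fun j => ((μ j : ℝ) : ℂ)) := by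
    rw [Matrix.conjTranspose_mul]
    calc Wᴴ * Xᴴ * (X * W) = Wᴴ * (Xᴴ * X) * W := by simp only [Matrix.mul_assoc]
      _ = (Wᴴ * W) * Matrix.diagonal (fun j => ((μ j : ℝ) : ℂ)) * (Wᴴ * W) := by
          rw [hspec]; simp only [Matrix.mul_assoc]
      _ = Matrix.diagonal (fun j => ((μ j : ℝ) : ℂ)) := by
          rw [hW2, Matrix.one_mul, Matrix.mul_one]
  have hcolX : ∀ j : Fin n, ∑ i, ‖(X * W) i j‖ ^ 2 = μ j := by
    intro j
    rw [col_sq, hXW, Matrix.diagonal_apply_eq, Complex.ofReal_re]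
  set e : Fin n → ℝ := fun j => if (j : ℕ) < m then q (j : ℕ) * q (j : ℕ) else 0 with he
  have hDD : Dᴴ * D = V * Matrix.diagonal (fun j => ((e j : ℝ) : ℂ)) * Vᴴ := by
    have hfun : (fun j : Fin n => if (j : ℕ) < m then ((q (j : ℕ) * q (j : ℕ) : ℝ) : ℂ) else 0)
        = fun j => ((e j : ℝ) : ℂ) := by
      funext j; by_cases h : (j : ℕ) < m <;> simp [he, h]
    rw [hD, sandwich hU2, rd_conj_mul, hfun]
  set Q : Matrix (Fin n) (Fin n) ℂ := Vᴴ * W with hQdef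
  have hQ2 : Qᴴ * Q = 1 := by
    rw [hQdef, Matrix.conjTranspose_mul, Matrix.conjTranspose_conjTranspose]
    calc Wᴴ * V * (Vᴴ * W) = Wᴴ * (V * Vᴴ) * W := by simp only [Matrix.mul_assoc]
      _ = 1 := by rw [hV1, Matrix.mul_one, hW2]
  have hDW : (D * W)ᴴ * (D * W) = Qᴴ * Matrix.diagonal (fun j => ((e j : ℝ) : ℂ)) * Q := by
    rw [Matrix.conjTranspose_mul]
    calc Wᴴ * Dᴴ * (D * W) = Wᴴ * (Dᴴ * D) * W := by simp only [Matrix.mul_assoc]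
      _ = Wᴴ * (V * Matrix.diagonal (fun j => ((e j : ℝ) : ℂ)) * Vᴴ) * W := by rw [hDD]
      _ = Qᴴ * Matrix.diagonal (fun j => ((e j : ℝ) : ℂ)) * Q := by
          rw [hQdef, Matrix.conjTranspose_mul, Matrix.conjTranspose_conjTranspose]
          simp only [Matrix.mul_assoc]
  have hcolD : ∀ j : Fin n, ∑ i, ‖(D * W) i j‖ ^ 2 ≤ τ ^ 2 := by
    intro j
    rw [col_sq, hDW, diag_quad]
    have hQcol : ∑ i, ‖Q i j‖ ^ 2 = 1 := by
      rw [col_sq, hQ2]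
      simp [Matrix.one_apply]
    calc ∑ i, e i * ‖Q i j‖ ^ 2
        ≤ ∑ i, τ ^ 2 * ‖Q i j‖ ^ 2 := by
          refine Finset.sum_le_sum fun i _ => ?_
          refine mul_le_mul_of_nonneg_right ?_ (by positivity)
          by_cases h : (i : ℕ) < m
          · simp only [he, if_pos h]
            calc q (i : ℕ) * q (i : ℕ) ≤ τ * τ :=
                mul_le_mul (hq1 _) (hq1 _) (hq0 _) hτ
              _ = τ ^ 2 := (sq τ).symm
          · simp only [he, if_neg h]; positivity
      _ = τ ^ 2 := by rw [← Finset.mul_sum, hQcol, mul_one]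
  have hkey : ∀ j : Fin n, (((D * W)ᴴ * (X * W)) j j).re ≤ τ * Real.sqrt (μ j) := by
    intro j
    set a : EuclideanSpace ℂ (Fin m) := (WithLp.equiv 2 _).symm (fun i => (D * W) i j) with ha
    set b : EuclideanSpace ℂ (Fin m) := (WithLp.equiv 2 _).symm (fun i => (X * W) i j) with hb
    have hinner : (inner ℂ a b : ℂ) = ((D * W)ᴴ * (X * W)) j j := by
      rw [PiLp.inner_apply, Matrix.mul_apply]
      refine Finset.sum_congr rfl fun i _ => ?_
      rw [Matrix.conjTranspose_apply, RCLike.inner_apply]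
      exact mul_comm _ _
    have h1 : (((D * W)ᴴ * (X * W)) j j).re ≤ ‖(inner ℂ a b : ℂ)‖ := by
      rw [hinner]
      exact Complex.re_le_norm _
    have h2 : ‖(inner ℂ a b : ℂ)‖ ≤ ‖a‖ * ‖b‖ := norm_inner_le_norm a b
    have hna : ‖a‖ ≤ τ := by
      rw [EuclideanSpace.norm_eq]
      have hsum : ∑ i, ‖a i‖ ^ 2 ≤ τ ^ 2 := by
        have : ∀ i, ‖a i‖ = ‖(D * W) i j‖ := fun i => rfl
        simp only [this]
        exact hcolD j
      calc Real.sqrt (∑ i, ‖a i‖ ^ 2) ≤ Real.sqrt (τ ^ 2) := Real.sqrt_le_sqrt hsum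
        _ = τ := Real.sqrt_sq hτ
    have hnb : ‖b‖ = Real.sqrt (μ j) := by
      rw [EuclideanSpace.norm_eq]
      congr 1
      have : ∀ i, ‖b i‖ = ‖(X * W) i j‖ := fun i => rfl
      simp only [this]
      exact hcolX j
    calc (((D * W)ᴴ * (X * W)) j j).re ≤ ‖a‖ * ‖b‖ := le_trans h1 h2
      _ ≤ τ * ‖b‖ := mul_le_mul_of_nonneg_right hna (norm_nonneg b)
      _ = τ * Real.sqrt (μ j) := by rw [hnb]
  have htr : rip D X = ∑ j, (((D * W)ᴴ * (X * W)) j j).re := by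
    rw [rip_trace]
    have h1 : Matrix.trace ((D * W)ᴴ * (X * W)) = Matrix.trace (Dᴴ * X) := by
      rw [Matrix.conjTranspose_mul]
      calc Matrix.trace (Wᴴ * Dᴴ * (X * W)) = Matrix.trace (Wᴴ * (Dᴴ * X) * W) := by
            simp only [Matrix.mul_assoc]
        _ = Matrix.trace (W * Wᴴ * (Dᴴ * X)) := by rw [Matrix.trace_mul_cycle]
        _ = Matrix.trace (Dᴴ * X) := by rw [hW1, Matrix.one_mul]
    rw [← h1, Matrix.trace, Complex.re_sum]
    rfl
  rw [htr]
  have hNN : nuclearNorm X = ∑ j, Real.sqrt (μ j) := rfl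
  calc ∑ j, (((D * W)ᴴ * (X * W)) j j).re ≤ ∑ j, τ * Real.sqrt (μ j) :=
      Finset.sum_le_sum fun j _ => hkey j
    _ = τ * nuclearNorm X := by rw [← Finset.mul_sum, hNN]

end ST

theorem soft_thresholding_unique_minimizer
    (m n : ℕ) (U : Matrix (Fin m) (Fin m) ℂ) (V : Matrix (Fin n) (Fin n) ℂ)
    (hU : U ∈ Matrix.unitaryGroup (Fin m) ℂ)
    (hV : V ∈ Matrix.unitaryGroup (Fin n) ℂ)
    (σ : ℕ → ℝ) (hσ : ∀ k, 0 ≤ σ k) (τ : ℝ) (hτ : 0 < τ)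
    (G : Matrix (Fin m) (Fin n) ℂ)
    (hG : G = U * (Matrix.of fun (i : Fin m) (j : Fin n) =>
      if (i : ℕ) = (j : ℕ) then ((σ (i : ℕ) : ℝ) : ℂ) else 0) * Vᴴ) :
    ∀ X : Matrix (Fin m) (Fin n) ℂ,
      X ≠ U * (Matrix.of fun (i : Fin m) (j : Fin n) =>
        if (i : ℕ) = (j : ℕ) then ((max (σ (i : ℕ) - τ) 0 : ℝ) : ℂ) else 0) * Vᴴ →
      τ * nuclearNorm (U * (Matrix.of fun (i : Fin m) (j : Fin n) =>
          if (i : ℕ) = (j : ℕ) then ((max (σ (i : ℕ) - τ) 0 : ℝ) : ℂ) else 0) * Vᴴ)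
        + (1 / 2) * frobSq ((U * (Matrix.of fun (i : Fin m) (j : Fin n) =>
          if (i : ℕ) = (j : ℕ) then ((max (σ (i : ℕ) - τ) 0 : ℝ) : ℂ) else 0) * Vᴴ) - G)
      < τ * nuclearNorm X + (1 / 2) * frobSq (X - G) := by
  intro X hX
  have hU1 : U * Uᴴ = 1 := by
    simpa [Matrix.star_eq_conjTranspose] using (Matrix.mem_unitaryGroup_iff).mp hU
  have hU2 : Uᴴ * U = 1 := by
    simpa [Matrix.star_eq_conjTranspose] using (Matrix.mem_unitaryGroup_iff').mp hU
  have hV1 : V * Vᴴ = 1 := by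
    simpa [Matrix.star_eq_conjTranspose] using (Matrix.mem_unitaryGroup_iff).mp hV
  have hV2 : Vᴴ * V = 1 := by
    simpa [Matrix.star_eq_conjTranspose] using (Matrix.mem_unitaryGroup_iff').mp hV
  set p : ℕ → ℝ := fun k => max (σ k - τ) 0 with hp
  set q : ℕ → ℝ := fun k => min (σ k) τ with hq
  have hS : (U * (Matrix.of fun (i : Fin m) (j : Fin n) =>
      if (i : ℕ) = (j : ℕ) then ((max (σ (i : ℕ) - τ) 0 : ℝ) : ℂ) else 0) * Vᴴ)
      = U * ST.rd m n p * Vᴴ := rfl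
  rw [hS] at hX ⊢
  set S := U * ST.rd m n p * Vᴴ with hSdef
  have hGr : G = U * ST.rd m n σ * Vᴴ := hG
  have hD : G - S = U * ST.rd m n q * Vᴴ := by
    have hsub : ST.rd m n σ - ST.rd m n p = ST.rd m n q := by
      ext i j
      simp only [Matrix.sub_apply, ST.rd, Matrix.of_apply]
      by_cases h : (i : ℕ) = (j : ℕ)
      · simp only [if_pos h, ← Complex.ofReal_sub]
        congr 1
        simp only [hp, hq]
        rcases le_total (σ (i : ℕ)) τ with h' | h'
        · rw [max_eq_right (by linarith), min_eq_left h']; ring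
        · rw [max_eq_left (by linarith), min_eq_right h']; ring
      · simp [h]
    rw [hGr, hSdef, ← hsub, Matrix.mul_sub, Matrix.sub_mul]
  have hp0 : ∀ k, 0 ≤ p k := fun k => le_max_right _ _
  have hq0 : ∀ k, 0 ≤ q k := fun k => le_min (hσ k) hτ.le
  have hq1 : ∀ k, q k ≤ τ := fun k => min_le_right _ _
  have hNS : nuclearNorm S = ∑ j : Fin n, (if (j : ℕ) < m then p (j : ℕ) else 0) :=
    ST.nuclearNorm_UDV hU2 hV1 hV2 p hp0
  have hPQ : ∀ k, p k * q k = τ * p k := by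
    intro k
    simp only [hp, hq]
    rcases le_total (σ k) τ with h' | h'
    · rw [max_eq_right (by linarith)]; ring
    · rw [min_eq_right h']; ring
  have hSD : ST.rip S (G - S) = τ * nuclearNorm S := by
    rw [hD, hSdef, ST.rip_UDV hU2 hV2, hNS, Finset.mul_sum]
    refine Finset.sum_congr rfl fun j _ => ?_
    by_cases h : (j : ℕ) < m
    · simp only [if_pos h, hPQ]
    · simp [h]
  have hexp : frobSq (X - G) = frobSq (X - S) + 2 * ST.rip (X - S) (S - G) + frobSq (S - G) := by
    have h0 : X - G = (X - S) + (S - G) := by abel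
    rw [h0, ST.frobSq_add]
  have hlin : ST.rip (X - S) (S - G) = ST.rip S (G - S) - ST.rip X (G - S) := by
    have h1 : S - G = -(G - S) := (neg_sub G S).symm
    rw [h1, ST.rip_neg_right, ST.rip_sub_left]
    ring
  have hx' : ST.rip X (G - S) ≤ τ * nuclearNorm X := by
    rw [ST.rip_comm, hD]
    exact ST.dual_bound hU2 hV1 hV2 hτ.le q hq0 hq1 X
  have hpos : 0 < frobSq (X - S) := ST.frobSq_pos (sub_ne_zero.mpr hX)
  linarith
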